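/- Let A be an invertible d × d real (or complex) matrix. Then ‖A⁻¹‖_HS ≤ ‖A‖_HS^{d-1} / (|det A| · d^{(d-2)/2}), where ‖·‖_HS denotes the Hilbert–Schmidt (Frobenius) norm. -/

import Mathlib

open Matrix

/-- The Hilbert–Schmidt (Frobenius) norm of a real square matrix. -/
noncomputable def hsNorm {d : ℕ} (A : Matrix (Fin d) (Fin d) ℝ) : ℝ :=
  Real.sqrt (∑ i, ∑ j, (A i j) ^ 2)

section Aux

lemma stmt6_bern_scaled (n : ℕ) (hn : 1 ≤ n) (S x : ℝ) (hS : 0 < S) (hx : 0 < x) :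
    ((n:ℝ)+1)^(n-1) * S^(n-1) * (S + (n:ℝ)^2*x) ≤ (n:ℝ)^n * (S+x)^n := by
  set u : ℝ := ((n:ℝ)*x - S)/(((n:ℝ)+1)*S) with hu_def
  have hden : (0:ℝ) < ((n:ℝ)+1)*S := by positivity
  have hn' : (1:ℝ) ≤ (n:ℝ) := by exact_mod_cast hn
  have hu : (-2:ℝ) ≤ u := by
    rw [hu_def, le_div_iff₀ hden]
    nlinarith
  have hb := one_add_mul_le_pow hu n
  have h1 : (1:ℝ) + u = ((n:ℝ)*(S+x))/(((n:ℝ)+1)*S) := by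
    rw [hu_def]; field_simp; ring
  have h2 : (1:ℝ) + (n:ℝ) * u = (S + (n:ℝ)^2*x)/(((n:ℝ)+1)*S) := by
    rw [hu_def]; field_simp; ring
  rw [h1, h2, div_pow] at hb
  rw [div_le_div_iff₀ hden (by positivity)] at hb
  have hcancel : (S + (n:ℝ)^2*x) * (((n:ℝ)+1)*S)^(n-1) ≤ ((n:ℝ)*(S+x))^n := by
    have hps : (((n:ℝ)+1)*S)^(n-1) * (((n:ℝ)+1)*S) = (((n:ℝ)+1)*S)^n := by
      rw [← pow_succ, Nat.sub_add_cancel hn]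
    refine le_of_mul_le_mul_right ?_ hden
    calc (S + (n:ℝ)^2*x) * (((n:ℝ)+1)*S)^(n-1) * (((n:ℝ)+1)*S)
        = (S + (n:ℝ)^2*x) * (((n:ℝ)+1)*S)^n := by rw [← hps]; ring
      _ ≤ ((n:ℝ)*(S+x))^n * (((n:ℝ)+1)*S) := hb
  calc ((n:ℝ)+1)^(n-1) * S^(n-1) * (S + (n:ℝ)^2*x)
      = (S + (n:ℝ)^2*x) * (((n:ℝ)+1)*S)^(n-1) := by rw [mul_pow]; ring
    _ ≤ ((n:ℝ)*(S+x))^n := hcancel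
    _ = (n:ℝ)^n * (S+x)^n := by rw [mul_pow]

lemma stmt6_amgm {ι : Type*} (s : Finset ι) (t : ι → ℝ) (ht : ∀ i ∈ s, 0 ≤ t i) :
    (s.card : ℝ) ^ s.card * ∏ i ∈ s, t i ≤ (∑ i ∈ s, t i) ^ s.card := by
  rcases Finset.eq_empty_or_nonempty s with rfl | hs
  · simp
  have hn : 0 < s.card := Finset.card_pos.2 hs
  have hn' : (0:ℝ) < s.card := by exact_mod_cast hn
  have h := Real.geom_mean_le_arith_mean s (fun _ => 1) t (by intro i _; norm_num)
    (by simp [hn']) ht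
  simp only [Real.rpow_one, Finset.sum_const, nsmul_eq_mul, mul_one, one_mul] at h
  have hP : (0:ℝ) ≤ ∏ i ∈ s, t i := Finset.prod_nonneg ht
  have h2 := pow_le_pow_left₀ (Real.rpow_nonneg hP _) h s.card
  rw [← Real.rpow_natCast ((∏ i ∈ s, t i) ^ ((s.card:ℝ))⁻¹) s.card, ← Real.rpow_mul hP,
      inv_mul_cancel₀ (ne_of_gt hn'), Real.rpow_one, div_pow] at h2
  rw [le_div_iff₀ (by positivity)] at h2
  calc (s.card : ℝ) ^ s.card * ∏ i ∈ s, t i = (∏ i ∈ s, t i) * (s.card:ℝ)^s.card := by ring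
    _ ≤ (∑ i ∈ s, t i) ^ s.card := h2

lemma stmt6_maclaurin {ι : Type*} [DecidableEq ι] (s : Finset ι) (t : ι → ℝ)
    (ht : ∀ i ∈ s, 0 < t i) :
    (∑ i ∈ s, ∏ j ∈ s.erase i, t j) * (s.card : ℝ) ^ s.card
      ≤ (∑ i ∈ s, t i) ^ (s.card - 1) * (s.card : ℝ) ^ 2 := by
  induction s using Finset.induction_on with
  | empty => simp
  | insert a s' ha ih =>
    have hta : 0 < t a := ht a (Finset.mem_insert_self a s')
    have hts : ∀ i ∈ s', 0 < t i := fun i hi => ht i (Finset.mem_insert_of_mem hi)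
    have ih' := ih hts
    have hcard : (insert a s').card = s'.card + 1 := Finset.card_insert_of_notMem ha
    have hsum : ∑ i ∈ insert a s', ∏ j ∈ (insert a s').erase i, t j
        = (∏ j ∈ s', t j) + t a * ∑ i ∈ s', ∏ j ∈ s'.erase i, t j := by
      rw [Finset.sum_insert ha, Finset.erase_insert ha]
      congr 1
      rw [Finset.mul_sum]
      refine Finset.sum_congr rfl fun i hi => ?_
      have hia : i ≠ a := fun h => ha (h ▸ hi)
      rw [Finset.erase_insert_of_ne hia.symm,
        Finset.prod_insert (fun h => ha (Finset.mem_of_mem_erase h))]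
    rw [hsum, hcard, Finset.sum_insert ha]
    set n := s'.card with hn_def
    rcases Nat.eq_zero_or_pos n with hn0 | hn
    · have hs' : s' = ∅ := Finset.card_eq_zero.mp (hn_def ▸ hn0)
      subst hs'
      simp [hn0]
    · set x := t a with hx_def
      set S := ∑ i ∈ s', t i with hS_def
      set P := ∏ j ∈ s', t j with hP_def
      set E := ∑ i ∈ s', ∏ j ∈ s'.erase i, t j with hE_def
      have hx : 0 < x := hta
      have hS : 0 < S := Finset.sum_pos hts (Finset.card_pos.mp hn)
      have hP : 0 < P := Finset.prod_pos hts
      have hE : 0 ≤ E := Finset.sum_nonneg fun i hi =>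
        Finset.prod_nonneg fun j hj => (hts j (Finset.mem_of_mem_erase hj)).le
      have hAM : (n:ℝ)^n * P ≤ S^n := stmt6_amgm s' t fun i hi => (hts i hi).le
      have hkey := stmt6_bern_scaled n hn S x hS hx
      have hSn : S^(n-1) * S = S^n := by
        rw [← pow_succ, Nat.sub_add_cancel hn]
      have hnn : (0:ℝ) < (n:ℝ)^n := by positivity
      rw [Nat.add_sub_cancel]
      push_cast
      refine le_of_mul_le_mul_left ?_ hnn
      have h1 : (n:ℝ)^n * (P + x*E) ≤ S^n + x * (S^(n-1) * (n:ℝ)^2) := by nlinarith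
      have hpow : ((n:ℝ)+1)^(n+1) = ((n:ℝ)+1)^(n-1) * ((n:ℝ)+1)^2 := by
        rw [← pow_add]
        congr 1
        omega
      calc (n:ℝ)^n * ((P + x*E) * ((n:ℝ)+1)^(n+1))
          = ((n:ℝ)^n * (P + x*E)) * ((n:ℝ)+1)^(n+1) := by ring
        _ ≤ (S^n + x * (S^(n-1) * (n:ℝ)^2)) * ((n:ℝ)+1)^(n+1) := by
            refine mul_le_mul_of_nonneg_right h1 (by positivity)
        _ = (((n:ℝ)+1)^(n-1) * S^(n-1) * (S + (n:ℝ)^2*x)) * ((n:ℝ)+1)^2 := by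
            rw [hpow, ← hSn]; ring
        _ ≤ ((n:ℝ)^n * (x+S)^n) * ((n:ℝ)+1)^2 := by
            refine mul_le_mul_of_nonneg_right ?_ (by positivity)
            rwa [show S + x = x + S by ring] at hkey
        _ = (n:ℝ)^n * ((x+S)^n * ((n:ℝ)+1)^2) := by ring

lemma stmt6_hsNorm_nonneg {d : ℕ} (A : Matrix (Fin d) (Fin d) ℝ) : 0 ≤ hsNorm A :=
  Real.sqrt_nonneg _

lemma stmt6_hsNorm_sq {d : ℕ} (A : Matrix (Fin d) (Fin d) ℝ) :
    hsNorm A ^ 2 = ∑ i, ∑ j, (A i j) ^ 2 :=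
  Real.sq_sqrt (by positivity)

lemma stmt6_trace_conjTranspose_mul {d : ℕ} (A : Matrix (Fin d) (Fin d) ℝ) :
    (Aᴴ * A).trace = ∑ i, ∑ j, (A i j) ^ 2 := by
  simp only [Matrix.trace, Matrix.diag, Matrix.mul_apply, Matrix.conjTranspose_apply,
    star_trivial]
  rw [Finset.sum_comm]
  simp [sq]

lemma stmt6_trace_eq_sum_eigenvalues {d : ℕ} (B : Matrix (Fin d) (Fin d) ℝ)
    (hB : B.IsHermitian) : B.trace = ∑ i, hB.eigenvalues i := by
  conv_lhs => rw [hB.spectral_theorem, Unitary.conjStarAlgAut_apply]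
  rw [Matrix.trace_mul_cycle]
  rw [show (star (hB.eigenvectorUnitary : Matrix (Fin d) (Fin d) ℝ)) *
      (hB.eigenvectorUnitary : Matrix (Fin d) (Fin d) ℝ) = 1 from
    Matrix.mem_unitaryGroup_iff'.mp hB.eigenvectorUnitary.2]
  rw [one_mul, Matrix.trace_diagonal]
  simp

lemma stmt6_trace_inv_eq_sum_inv_eigenvalues {d : ℕ} (B : Matrix (Fin d) (Fin d) ℝ)
    (hB : B.IsHermitian) (hpos : ∀ i, hB.eigenvalues i ≠ 0) :
    B⁻¹.trace = ∑ i, (hB.eigenvalues i)⁻¹ := by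
  set U : Matrix (Fin d) (Fin d) ℝ := (hB.eigenvectorUnitary : Matrix (Fin d) (Fin d) ℝ) with hU
  have hUU : star U * U = 1 := Matrix.mem_unitaryGroup_iff'.mp hB.eigenvectorUnitary.2
  have hUU' : U * star U = 1 := Matrix.mem_unitaryGroup_iff.mp hB.eigenvectorUnitary.2
  have hUinv : U⁻¹ = star U := Matrix.inv_eq_left_inv hUU
  have hsUinv : (star U)⁻¹ = U := Matrix.inv_eq_left_inv hUU'
  have hDinv : (Matrix.diagonal (RCLike.ofReal ∘ hB.eigenvalues) : Matrix (Fin d) (Fin d) ℝ)⁻¹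
      = Matrix.diagonal (fun i => (hB.eigenvalues i)⁻¹) := by
    refine Matrix.inv_eq_right_inv ?_
    rw [Matrix.diagonal_mul_diagonal]
    have hf : (fun i => (RCLike.ofReal ∘ hB.eigenvalues : Fin d → ℝ) i * (hB.eigenvalues i)⁻¹)
        = fun _ => (1:ℝ) := funext fun i => by simp [mul_inv_cancel₀ (hpos i)]
    rw [hf]
    simp
  conv_lhs => rw [hB.spectral_theorem, Unitary.conjStarAlgAut_apply]
  rw [Matrix.mul_inv_rev, Matrix.mul_inv_rev, hUinv, hsUinv, hDinv]
  rw [← mul_assoc, Matrix.trace_mul_cycle, hUU, one_mul, Matrix.trace_diagonal]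

end Aux

/-- For an invertible `d × d` real matrix `A` (`d ≥ 1`),
`‖A⁻¹‖_HS ≤ ‖A‖_HS^(d-1) / (|det A| · d^((d-2)/2))`. -/
theorem stmt6 (d : ℕ) (hd : 1 ≤ d) (A : Matrix (Fin d) (Fin d) ℝ)
    (hA : IsUnit A.det) :
    hsNorm A⁻¹ ≤ hsNorm A ^ (d - 1) / (|A.det| * (d : ℝ) ^ (((d : ℝ) - 2) / 2)) := by
  have hdet : A.det ≠ 0 := hA.ne_zero
  set B : Matrix (Fin d) (Fin d) ℝ := Aᴴ * A with hB_def
  have hPSD : B.PosSemidef := Matrix.posSemidef_conjTranspose_mul_self A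
  have hB : B.IsHermitian := hPSD.1
  set t : Fin d → ℝ := hB.eigenvalues with ht_def
  have hdetB : B.det = A.det ^ 2 := by
    rw [hB_def, Matrix.det_mul, Matrix.det_conjTranspose, star_trivial, sq]
  have hprod : ∏ i, t i = A.det ^ 2 := by
    have := hB.det_eq_prod_eigenvalues
    rw [hdetB] at this
    simpa using this.symm
  have ht_ne : ∀ i, t i ≠ 0 := by
    intro i
    have : ∏ j, t j ≠ 0 := by rw [hprod]; positivity
    exact fun h => this (Finset.prod_eq_zero (Finset.mem_univ i) h)
  have ht_pos : ∀ i, 0 < t i := fun i => lt_of_le_of_ne (hPSD.eigenvalues_nonneg i)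
    (Ne.symm (ht_ne i))
  -- trace identities
  have hS : hsNorm A ^ 2 = ∑ i, t i := by
    rw [stmt6_hsNorm_sq, ← stmt6_trace_conjTranspose_mul, ← hB_def,
      stmt6_trace_eq_sum_eigenvalues B hB]
  have hT : hsNorm A⁻¹ ^ 2 = ∑ i, (t i)⁻¹ := by
    rw [← stmt6_trace_inv_eq_sum_inv_eigenvalues B hB ht_ne]
    have hBinv : B⁻¹ = ((A⁻¹)ᴴ)ᴴ * (A⁻¹)ᴴ := by
      rw [hB_def, Matrix.mul_inv_rev, Matrix.conjTranspose_conjTranspose,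
        ← Matrix.conjTranspose_nonsing_inv]
    rw [hBinv, stmt6_trace_conjTranspose_mul, stmt6_hsNorm_sq]
    rw [Finset.sum_comm]
    simp [Matrix.conjTranspose_apply]
  -- Maclaurin inequality for the eigenvalues
  have hmac := stmt6_maclaurin Finset.univ t (fun i _ => ht_pos i)
  rw [Finset.card_univ, Fintype.card_fin] at hmac
  have herase : ∀ i : Fin d, ∏ j ∈ Finset.univ.erase i, t j = (∏ j, t j) * (t i)⁻¹ := by
    intro i
    rw [← Finset.mul_prod_erase Finset.univ t (Finset.mem_univ i),
      mul_comm (t i), mul_assoc, mul_inv_cancel₀ (ht_ne i), mul_one]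
  have hsum_erase : ∑ i, ∏ j ∈ Finset.univ.erase i, t j
      = (∑ i, (t i)⁻¹) * ∏ j, t j := by
    calc ∑ i, ∏ j ∈ Finset.univ.erase i, t j
        = ∑ i, (∏ j, t j) * (t i)⁻¹ := Finset.sum_congr rfl (fun i _ => herase i)
      _ = (∏ j, t j) * ∑ i, (t i)⁻¹ := (Finset.mul_sum _ _ _).symm
      _ = (∑ i, (t i)⁻¹) * ∏ j, t j := mul_comm _ _
  rw [hsum_erase] at hmac
  -- positivity facts
  have hd0 : (0:ℝ) < d := by exact_mod_cast hd
  have hdetsq : (0:ℝ) < A.det ^ 2 := by positivity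
  have hrp : (0:ℝ) < (d:ℝ) ^ (((d:ℝ)-2)/2) := Real.rpow_pos_of_pos hd0 _
  have hLnn : 0 ≤ hsNorm A⁻¹ := stmt6_hsNorm_nonneg _
  have hRnn : 0 ≤ hsNorm A ^ (d-1) / (|A.det| * (d:ℝ) ^ (((d:ℝ)-2)/2)) := by
    exact div_nonneg (pow_nonneg (stmt6_hsNorm_nonneg A) _) (mul_nonneg (abs_nonneg _) hrp.le)
  -- reduce to squares
  have hsq : hsNorm A⁻¹ ^ 2 ≤ (hsNorm A ^ (d-1) / (|A.det| * (d:ℝ) ^ (((d:ℝ)-2)/2))) ^ 2 := by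
    rw [div_pow, mul_pow, sq_abs]
    have hexp : ((d:ℝ) ^ (((d:ℝ)-2)/2)) ^ 2 = (d:ℝ)^(d:ℕ) / (d:ℝ)^2 := by
      rw [← Real.rpow_natCast ((d:ℝ) ^ (((d:ℝ)-2)/2)) 2, ← Real.rpow_mul hd0.le,
        show (((d:ℝ)-2)/2 * ((2:ℕ):ℝ)) = (d:ℝ) - 2 by push_cast; ring,
        Real.rpow_sub hd0, Real.rpow_natCast]
      norm_num [show ((2:ℝ):ℝ) = ((2:ℕ):ℝ) by norm_num, Real.rpow_natCast]
    rw [hexp]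
    have hnum : (hsNorm A ^ (d-1)) ^ 2 = (∑ i, t i) ^ (d-1) := by
      rw [← pow_mul, mul_comm, pow_mul, hS]
    rw [hnum, hT]
    rw [le_div_iff₀ (by positivity)]
    have hd2 : (0:ℝ) < (d:ℝ)^2 := by positivity
    refine le_of_mul_le_mul_right ?_ hd2
    calc (∑ i, (t i)⁻¹) * (A.det ^ 2 * ((d:ℝ)^(d:ℕ) / (d:ℝ)^2)) * (d:ℝ)^2
        = (∑ i, (t i)⁻¹) * (∏ j, t j) * (d:ℝ)^(d:ℕ) := by
          rw [← hprod]; field_simp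
      _ ≤ (∑ i, t i) ^ (d-1) * (d:ℝ)^2 := hmac
  calc hsNorm A⁻¹ = Real.sqrt (hsNorm A⁻¹ ^ 2) := (Real.sqrt_sq hLnn).symm
    _ ≤ Real.sqrt ((hsNorm A ^ (d-1) / (|A.det| * (d:ℝ) ^ (((d:ℝ)-2)/2))) ^ 2) :=
        Real.sqrt_le_sqrt hsq
    _ = hsNorm A ^ (d-1) / (|A.det| * (d:ℝ) ^ (((d:ℝ)-2)/2)) := Real.sqrt_sq hRnn
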